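/- Let M be the space of symmetric (n+1)×(n+1) matrices m(z,x) = [[−z, −xᵀ],[−x, 0]] (z ∈ ℝ, x ∈ ℝⁿ), and let a(t,y) = [[1,0],[−y/2, Iₙ]]·[[e^{−pt/2},0],[0, e^{pt/2}(e^{−Bt})ᵀ]]. Then (a(t,y)⁻¹)ᵀ m(z,x) a(t,y)⁻¹ = m(e^{pt}z + yᵀe^{Bt}x, e^{Bt}x); in particular M is invariant under the action m ↦ (a⁻¹)ᵀ m a⁻¹. -/

import Mathlib

open Matrix

/-- m(z,x) = [[−z, −xᵀ],[−x, 0]] ∈ Sym(n+1,ℝ). -/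
noncomputable def mMat (n : ℕ) (z : ℝ) (x : Fin n → ℝ) :
    Matrix (Unit ⊕ Fin n) (Unit ⊕ Fin n) ℝ :=
  Matrix.fromBlocks (-z • 1) (fun _ j => -x j) (fun i _ => -x i) 0

/-- a(t,y) = [[1,0],[−y/2, Iₙ]] · [[e^{−pt/2},0],[0, e^{pt/2}(e^{−Bt})ᵀ]]. -/
noncomputable def aMat (n : ℕ) (p₁ p₂ : ℝ) (B₁ B₂ : Matrix (Fin n) (Fin n) ℝ)
    (t₁ t₂ : ℝ) (y : Fin n → ℝ) : Matrix (Unit ⊕ Fin n) (Unit ⊕ Fin n) ℝ :=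
  Matrix.fromBlocks 1 0 (fun i _ => -(1 / 2) * y i) 1 *
    Matrix.fromBlocks (Real.exp (-(p₁ * t₁ + p₂ * t₂) / 2) • 1) 0 0
      (Real.exp ((p₁ * t₁ + p₂ * t₂) / 2) •
        (NormedSpace.exp (-(t₁ • B₁ + t₂ • B₂)))ᵀ)

/-- (a(t,y)⁻¹)ᵀ m(z,x) a(t,y)⁻¹ = m(e^{pt}z + yᵀe^{Bt}x, e^{Bt}x); in particular the
space M of matrices m(z,x) is invariant under the action m ↦ (a⁻¹)ᵀ m a⁻¹. -/
theorem mMat_action (n : ℕ) (p₁ p₂ : ℝ) (B₁ B₂ : Matrix (Fin n) (Fin n) ℝ)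
    (hB : B₁ * B₂ = B₂ * B₁) (t₁ t₂ : ℝ) (y : Fin n → ℝ) (z : ℝ) (x : Fin n → ℝ) :
    ((aMat n p₁ p₂ B₁ B₂ t₁ t₂ y)⁻¹)ᵀ * mMat n z x * (aMat n p₁ p₂ B₁ B₂ t₁ t₂ y)⁻¹ =
      mMat n (Real.exp (p₁ * t₁ + p₂ * t₂) * z +
          y ⬝ᵥ (NormedSpace.exp (t₁ • B₁ + t₂ • B₂) *ᵥ x))
        (NormedSpace.exp (t₁ • B₁ + t₂ • B₂) *ᵥ x) := by
  simp only [aMat, mMat]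
  set q := p₁ * t₁ + p₂ * t₂ with hq
  set Mb := t₁ • B₁ + t₂ • B₂ with hMb
  set E := NormedSpace.exp Mb with hE
  set F := NormedSpace.exp (-Mb) with hF
  set α := Real.exp (-q / 2) with hα
  set β := Real.exp (q / 2) with hβ
  have hEF : E * F = 1 := by
    rw [hE, hF, ← Matrix.exp_add_of_commute Mb (-Mb) (Commute.refl Mb).neg_right, add_neg_cancel,
      NormedSpace.exp_zero]
  have hαβ : α * β = 1 := by rw [hα, hβ, ← Real.exp_add, show -q / 2 + q / 2 = 0 from by ring, Real.exp_zero]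
  have hββ : β * β = Real.exp q := by rw [hβ, ← Real.exp_add]; ring_nf
  clear_value E F
  clear_value α β
  clear_value q Mb
  set c : Matrix (Fin n) Unit ℝ := fun i _ => -(1 / 2) * y i with hc
  set c' : Matrix (Fin n) Unit ℝ := fun i _ => (1 / 2) * y i with hc'
  set A' : Matrix (Unit ⊕ Fin n) (Unit ⊕ Fin n) ℝ :=
    fromBlocks (β • 1) 0 0 (α • Eᵀ) * fromBlocks 1 0 c' 1 with hA'
  have hainv : (fromBlocks 1 0 c 1 *
      fromBlocks (α • (1 : Matrix Unit Unit ℝ)) 0 0 (β • Fᵀ))⁻¹ = A' := by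
    apply Matrix.inv_eq_right_inv
    rw [hA', Matrix.mul_assoc, ← Matrix.mul_assoc (fromBlocks (α • 1) 0 0 (β • Fᵀ))]
    have hDD : (fromBlocks (α • (1 : Matrix Unit Unit ℝ)) 0 0 (β • Fᵀ)) *
        fromBlocks (β • 1) 0 0 (α • Eᵀ) = 1 := by
      rw [Matrix.fromBlocks_multiply]
      simp only [Matrix.mul_zero, Matrix.zero_mul, add_zero, zero_add,
        Matrix.smul_mul, Matrix.mul_smul, smul_smul, Matrix.mul_one, smul_zero,
        ← Matrix.transpose_mul]
      rw [mul_comm β α, hαβ, hEF, Matrix.transpose_one, one_smul, one_smul,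
        Matrix.fromBlocks_one]
    rw [hDD, Matrix.one_mul, Matrix.fromBlocks_multiply]
    simp only [Matrix.mul_zero, Matrix.zero_mul, add_zero, zero_add, Matrix.one_mul,
      Matrix.mul_one]
    have : c + c' = 0 := by ext i j; change -(1 / 2) * y i + 1 / 2 * y i = (0 : ℝ); ring
    rw [this, Matrix.fromBlocks_one]
  rw [hainv, hA']
  rw [Matrix.transpose_mul, Matrix.fromBlocks_transpose, Matrix.fromBlocks_transpose]
  simp only [Matrix.transpose_smul, Matrix.transpose_one, Matrix.transpose_zero,
    Matrix.transpose_transpose]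
  rw [show ∀ (P Q R S T : Matrix (Unit ⊕ Fin n) (Unit ⊕ Fin n) ℝ),
      P * Q * R * (S * T) = P * (Q * R * S) * T by intros; noncomm_ring]
  set Bx : Matrix Unit (Fin n) ℝ := fun _ j => -x j with hBx
  set Cx : Matrix (Fin n) Unit ℝ := fun i _ => -x i with hCx
  rw [Matrix.fromBlocks_multiply, Matrix.fromBlocks_multiply, Matrix.fromBlocks_multiply,
    Matrix.fromBlocks_multiply]
  simp only [Matrix.mul_zero, Matrix.zero_mul, Matrix.mul_one, Matrix.one_mul, add_zero,
    zero_add, Matrix.smul_mul, Matrix.mul_smul, smul_smul]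
  set Bx' : Matrix Unit (Fin n) ℝ := fun _ j => -(E *ᵥ x) j with hBx'
  set Cx' : Matrix (Fin n) Unit ℝ := fun i _ => -(E *ᵥ x) i with hCx'
  rw [Matrix.fromBlocks_inj]
  simp only [show Bx = Matrix.of (fun _ j => -x j) from rfl,
    show Cx = Matrix.of (fun i _ => -x i) from rfl,
    show Bx' = Matrix.of (fun _ j => -(E *ᵥ x) j) from rfl,
    show Cx' = Matrix.of (fun i _ => -(E *ᵥ x) i) from rfl,
    show c' = Matrix.of (fun i _ => (1 / 2) * y i) from rfl]
  refine ⟨?_, ?_, ?_, ?_⟩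
  · ext u v
    simp only [Matrix.of_apply, Matrix.add_apply, Matrix.smul_apply, Matrix.mul_apply, Matrix.one_apply_eq,
      smul_eq_mul, Matrix.zero_apply, smul_zero, zero_add, mul_zero, add_zero, zero_mul,
      Matrix.transpose_apply, Matrix.neg_apply, Matrix.mulVec, dotProduct,
      Finset.mul_sum, Finset.sum_mul, mul_one]
    rw [add_assoc, ← Finset.sum_add_distrib, neg_add, ← Finset.sum_neg_distrib]
    congr 1
    · rw [show β * (-z * β) = -(β * β * z) from by ring, hββ]
    · refine Finset.sum_congr rfl fun j _ => ?_
      rw [← Finset.sum_add_distrib, ← Finset.sum_neg_distrib]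
      refine Finset.sum_congr rfl fun i _ => ?_
      linear_combination (-(y j * (E j i * x i))) * hαβ
  · ext u j
    simp only [Matrix.add_apply, Matrix.smul_apply, Matrix.mul_apply, smul_eq_mul,
      Matrix.zero_apply, smul_zero, add_zero, mul_zero, Matrix.transpose_apply, hαβ, Matrix.of_apply,
      Matrix.mulVec, dotProduct, one_mul]
    rw [← Finset.sum_neg_distrib]
    exact Finset.sum_congr rfl fun k _ => by ring
  · ext i v
    simp only [Matrix.add_apply, Matrix.smul_apply, Matrix.mul_apply, smul_eq_mul,
      Matrix.zero_apply, smul_zero, zero_add, add_zero, mul_zero, zero_mul,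
      Matrix.mulVec, dotProduct, Finset.mul_sum, Finset.sum_const_zero, Matrix.of_apply]
    rw [← Finset.sum_neg_distrib]
    refine Finset.sum_congr rfl fun k _ => ?_
    linear_combination (-(E i k * x k)) * hαβ
  · simp
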